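/- Let L be a subcomplex of a simplicial complex N in ℝⁿ with a strong deformation retraction H : N × I → N onto L. Then for the cone with apex v, there exists a strong deformation retraction of Cone_v(N) onto Cone_v(L) whose restriction to N is H. -/

import Mathlib

open Geometry Set

/-- `H` is a strong deformation retraction of `A` onto `B` (within ambient space `α`). -/
def IsSDRWith {α : Type*} [TopologicalSpace α] (A B : Set α) (H : ℝ → α → α) : Prop :=
  B ⊆ A ∧
  ContinuousOn (fun p : ℝ × α => H p.1 p.2) (Set.Icc (0 : ℝ) 1 ×ˢ A) ∧
  (∀ x ∈ A, H 0 x = x) ∧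
  (∀ t ∈ Set.Icc (0 : ℝ) 1, ∀ x ∈ A, H t x ∈ A) ∧
  (∀ x ∈ A, H 1 x ∈ B) ∧
  (∀ t ∈ Set.Icc (0 : ℝ) 1, ∀ x ∈ B, H t x = x)

/-- The geometric cone with apex `v` over a set `A`: the union of segments from `v`
to points of `A`. -/
def coneSet {m : ℕ} (v : Fin m → ℝ) (A : Set (Fin m → ℝ)) : Set (Fin m → ℝ) :=
  {y | ∃ x ∈ A, ∃ t ∈ Set.Icc (0 : ℝ) 1, y = t • v + (1 - t) • x}

set_option maxHeartbeats 1600000 in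
/-- a strong deformation retraction `H` of (the underlying space of) a
simplicial complex `N` onto a subcomplex `L` extends to a strong deformation retraction of
`Cone_v(N)` onto `Cone_v(L)` restricting to `H` on `N`.  (The apex `v` lies outside the
affine span of `N`, as when the cone is realized in one higher dimension.) -/
theorem cone_strong_deformation_retract {m : ℕ}
    (N L : SimplicialComplex ℝ (Fin m → ℝ)) (hL : L.faces ⊆ N.faces)
    (v : Fin m → ℝ) (hv : v ∉ affineSpan ℝ N.space)
    (H : ℝ → (Fin m → ℝ) → (Fin m → ℝ)) (hH : IsSDRWith N.space L.space H) :
    ∃ H' : ℝ → (Fin m → ℝ) → (Fin m → ℝ),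
      IsSDRWith (coneSet v N.space) (coneSet v L.space) H' ∧
      ∀ t ∈ Set.Icc (0 : ℝ) 1, ∀ x ∈ N.space, H' t x = H t x := by
  classical
  obtain ⟨hBA, hcont, h0, hmaps, h1, hfix⟩ := hH
  have hLN : L.space ⊆ N.space := by
    refine Set.iUnion₂_subset fun s hs => ?_
    exact Set.subset_iUnion₂_of_subset s (hL hs) subset_rfl
  have hconeLN : coneSet v L.space ⊆ coneSet v N.space := by
    rintro y ⟨x, hx, t, ht, rfl⟩; exact ⟨x, hLN hx, t, ht, rfl⟩
  by_cases hNe : N.space.Nonempty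
  swap
  · -- empty case
    have hNsp : N.space = ∅ := Set.not_nonempty_iff_eq_empty.mp hNe
    have hcone : coneSet v N.space = ∅ := by
      ext y; simp [coneSet, hNsp]
    have hconeL : coneSet v L.space = ∅ :=
      Set.eq_empty_of_subset_empty (hcone ▸ hconeLN)
    refine ⟨H, ⟨?_, ?_, ?_, ?_, ?_, ?_⟩, ?_⟩ <;>
      simp [hcone, hconeL]
  obtain ⟨p, hp⟩ := hNe
  have hpspan : p ∈ affineSpan ℝ N.space := subset_affineSpan ℝ _ hp
  -- the affine functional F with F v = 1, F = 0 on N.space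
  have hvp : v - p ∉ (affineSpan ℝ N.space).direction := by
    intro h
    apply hv
    have := AffineSubspace.vadd_mem_of_mem_direction h hpspan
    simpa using this
  obtain ⟨g0, hg0, hker⟩ :=
    Submodule.exists_dual_map_eq_bot_of_notMem hvp inferInstance
  set g : Module.Dual ℝ (Fin m → ℝ) := (g0 (v - p))⁻¹ • g0 with hg
  have hgvp : g (v - p) = 1 := by
    rw [hg]
    simp only [LinearMap.smul_apply, smul_eq_mul]
    exact inv_mul_cancel₀ hg0
  have hgW : ∀ w ∈ (affineSpan ℝ N.space).direction, g w = 0 := by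
    intro w hw
    have : g0 w = 0 := by
      have : g0 w ∈ (affineSpan ℝ N.space).direction.map g0 :=
        Submodule.mem_map_of_mem hw
      rw [hker] at this
      simpa using this
    simp [hg, this]
  set F : (Fin m → ℝ) → ℝ := fun y => g (y - p) with hFdef
  have hFcont : Continuous F :=
    (LinearMap.continuous_of_finiteDimensional g).comp
      (continuous_id.sub continuous_const)
  have hFv : F v = 1 := hgvp
  have hFx : ∀ x ∈ N.space, F x = 0 := by
    intro x hx
    exact hgW _ (AffineSubspace.vsub_mem_direction (subset_affineSpan ℝ _ hx) hpspan)
  have key : ∀ x ∈ N.space, ∀ s : ℝ, F (s • v + (1 - s) • x) = s := by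
    intro x hx s
    have hrew : s • v + (1 - s) • x - p = s • (v - p) + (1 - s) • (x - p) := by
      module
    have hx0 : g (x - p) = 0 := hFx x hx
    simp only [hFdef, hrew, map_add, map_smul, hgvp, smul_eq_mul, hx0]
    ring
  set xof : (Fin m → ℝ) → (Fin m → ℝ) := fun y => (1 - F y)⁻¹ • (y - F y • v)
    with hxofdef
  have keyx : ∀ (x : Fin m → ℝ), ∀ s : ℝ, s ≠ 1 → F (s • v + (1 - s) • x) = s →
      xof (s • v + (1 - s) • x) = x := by
    intro x s hs hFs
    have h1s : (1 : ℝ) - s ≠ 0 := sub_ne_zero.mpr (Ne.symm hs)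
    simp only [hxofdef, hFs]
    have : s • v + (1 - s) • x - s • v = (1 - s) • x := by module
    rw [this, smul_smul, inv_mul_cancel₀ h1s, one_smul]
  -- decoding cone points
  have hdec : ∀ y ∈ coneSet v N.space, F y ∈ Set.Icc (0:ℝ) 1 ∧
      (F y ≠ 1 → xof y ∈ N.space ∧ y = F y • v + (1 - F y) • xof y) ∧
      (F y = 1 → y = v) := by
    rintro y ⟨x, hx, s, hs, rfl⟩
    have hFy : F (s • v + (1 - s) • x) = s := key x hx s
    rw [hFy]
    refine ⟨hs, fun hne => ?_, fun he => ?_⟩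
    · rw [keyx x s hne hFy]
      exact ⟨hx, rfl⟩
    · subst he
      simp
  set σ : ℝ → (Fin m → ℝ) → ℝ := fun t y =>
    min 1 (F y * ‖H t (xof y) - xof y‖ / Real.sqrt (1 - F y)) with hσdef
  set H' : ℝ → (Fin m → ℝ) → (Fin m → ℝ) := fun t y =>
    (F y + (1 - F y) * σ t y) • v + ((1 - F y) * (1 - σ t y)) • H t (xof y)
    with hH'def
  -- restriction to N.space
  have hxofN : ∀ x ∈ N.space, xof x = x := by
    intro x hx
    simp [hxofdef, hFx x hx]
  have hrestr : ∀ t : ℝ, ∀ x ∈ N.space, H' t x = H t x := by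
    intro t x hx
    simp [hH'def, hσdef, hFx x hx, hxofN x hx]
  -- value at apex
  have hapex : ∀ t : ℝ, H' t v = v := by
    intro t
    simp [hH'def, hFv]
  have hσmem : ∀ t y, y ∈ coneSet v N.space → σ t y ∈ Set.Icc (0:ℝ) 1 := by
    intro t y hy
    obtain ⟨hr, _, _⟩ := hdec y hy
    constructor
    · exact le_min zero_le_one
        (div_nonneg (mul_nonneg hr.1 (norm_nonneg _)) (Real.sqrt_nonneg _))
    · exact min_le_left _ _
  have hφmem : ∀ t y, y ∈ coneSet v N.space →
      F y + (1 - F y) * σ t y ∈ Set.Icc (0:ℝ) 1 := by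
    intro t y hy
    obtain ⟨hr, _, _⟩ := hdec y hy
    obtain ⟨hσ0, hσ1⟩ := hσmem t y hy
    constructor
    · have := mul_nonneg (sub_nonneg.mpr hr.2) hσ0
      linarith [hr.1]
    · nlinarith [hr.1, hr.2]
  have hform : ∀ t y, H' t y =
      (F y + (1 - F y) * σ t y) • v +
        (1 - (F y + (1 - F y) * σ t y)) • H t (xof y) := by
    intro t y
    simp only [hH'def]
    have : (1 : ℝ) - (F y + (1 - F y) * σ t y) = (1 - F y) * (1 - σ t y) := by ring
    rw [this]
  refine ⟨H', ⟨hconeLN, ?_, ?_, ?_, ?_, ?_⟩, fun t _ x hx => hrestr t x hx⟩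
  · -- continuity
    intro q hq
    obtain ⟨hq1, hq2⟩ := hq
    by_cases hlt : F q.2 < 1
    · -- away from the apex
      have hUopen : IsOpen {r : ℝ × (Fin m → ℝ) | F r.2 < 1} :=
        isOpen_lt (hFcont.comp continuous_snd) continuous_const
      have hU : {r : ℝ × (Fin m → ℝ) | F r.2 < 1} ∈ nhds q := hUopen.mem_nhds hlt
      rw [← continuousWithinAt_inter hU]
      set S' := (Set.Icc (0:ℝ) 1 ×ˢ coneSet v N.space) ∩
        {r : ℝ × (Fin m → ℝ) | F r.2 < 1} with hS'
      have hc1 : ContinuousAt (fun r : ℝ × (Fin m → ℝ) => F r.2) q :=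
        (hFcont.comp continuous_snd).continuousAt
      have h1F : (1:ℝ) - F q.2 ≠ 0 := ne_of_gt (sub_pos.mpr hlt)
      have hcx : ContinuousAt (fun r : ℝ × (Fin m → ℝ) => xof r.2) q := by
        simp only [hxofdef]
        exact ((continuousAt_const.sub hc1).inv₀ h1F).smul
          (continuous_snd.continuousAt.sub (hc1.smul continuousAt_const))
      have hxofmem : xof q.2 ∈ N.space := ((hdec q.2 hq2).2.1 (ne_of_lt hlt)).1
      have hHc : ContinuousWithinAt
          (fun r : ℝ × (Fin m → ℝ) => H r.1 (xof r.2)) S' q := by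
        have hmem : (q.1, xof q.2) ∈ Set.Icc (0:ℝ) 1 ×ˢ N.space := ⟨hq1, hxofmem⟩
        have hmaps2 : Set.MapsTo (fun r : ℝ × (Fin m → ℝ) => (r.1, xof r.2)) S'
            (Set.Icc (0:ℝ) 1 ×ˢ N.space) := by
          rintro r ⟨⟨hr1, hr2⟩, hrU⟩
          exact ⟨hr1, ((hdec r.2 hr2).2.1 (ne_of_lt hrU)).1⟩
        have := ContinuousWithinAt.comp
          (f := fun r : ℝ × (Fin m → ℝ) => (r.1, xof r.2))
          (g := fun p : ℝ × (Fin m → ℝ) => H p.1 p.2) (hcont _ hmem)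
          ((continuous_fst.continuousAt.prodMk hcx).continuousWithinAt) hmaps2
        exact this
      have hσc : ContinuousWithinAt (fun r : ℝ × (Fin m → ℝ) => σ r.1 r.2) S' q := by
        simp only [hσdef]
        refine continuousWithinAt_const.min ?_
        have hsq : ContinuousWithinAt
            (fun r : ℝ × (Fin m → ℝ) => Real.sqrt (1 - F r.2)) S' q :=
          (Real.continuous_sqrt.comp
            (continuous_const.sub (hFcont.comp continuous_snd))).continuousWithinAt
        have hden : Real.sqrt (1 - F q.2) ≠ 0 :=
          ne_of_gt (Real.sqrt_pos.mpr (sub_pos.mpr hlt))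
        exact (hc1.continuousWithinAt.mul
          ((hHc.sub hcx.continuousWithinAt).norm)).div hsq hden
      show ContinuousWithinAt (fun r : ℝ × (Fin m → ℝ) => H' r.1 r.2) S' q
      simp only [hH'def]
      exact ((hc1.continuousWithinAt.add
        ((continuousWithinAt_const.sub hc1.continuousWithinAt).mul hσc)).smul
          continuousWithinAt_const).add
        (((continuousWithinAt_const.sub hc1.continuousWithinAt).mul
          (continuousWithinAt_const.sub hσc)).smul hHc)
    · -- at the apex
      have hF1 : F q.2 = 1 := le_antisymm (hdec q.2 hq2).1.2 (not_lt.mp hlt)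
      have hqv : q.2 = v := (hdec q.2 hq2).2.2 hF1
      have hval : H' q.1 q.2 = v := by rw [hqv]; exact hapex q.1
      have hbound : ∀ r ∈ Set.Icc (0:ℝ) 1 ×ˢ coneSet v N.space, (1:ℝ)/2 ≤ F r.2 →
          ‖H' r.1 r.2 - v‖ ≤ ‖r.2 - v‖ + 2 * Real.sqrt (1 - F r.2) := by
        rintro ⟨t, y⟩ ⟨ht, hy⟩ hhalf
        obtain ⟨hr, hltc, he⟩ := hdec y hy
        by_cases h1f : F y = 1
        · rw [he h1f]
          simp [hapex, hFv, Real.sqrt_nonneg]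
        · obtain ⟨hxN, hyeq⟩ := hltc h1f
          have hs1 : F y < 1 := lt_of_le_of_ne hr.2 h1f
          obtain ⟨hσ0, hσ1⟩ := hσmem t y hy
          have hdiff : H' t y - v =
              ((1 - F y) * (1 - σ t y)) • (H t (xof y) - v) := by
            simp only [hH'def]
            module
          have hnorm1 : ‖H' t y - v‖ =
              (1 - F y) * (1 - σ t y) * ‖H t (xof y) - v‖ := by
            rw [hdiff, norm_smul, Real.norm_eq_abs,
              abs_of_nonneg (mul_nonneg (by linarith) (by linarith))]
          have htri : ‖H t (xof y) - v‖ ≤ ‖H t (xof y) - xof y‖ + ‖xof y - v‖ :=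
            norm_sub_le_norm_sub_add_norm_sub _ _ _
          have hyv : ‖y - v‖ = (1 - F y) * ‖xof y - v‖ := by
            have hyd : y - v = (1 - F y) • (xof y - v) := by
              conv_lhs => rw [hyeq]
              module
            rw [hyd, norm_smul, Real.norm_eq_abs, abs_of_nonneg (by linarith)]
          have hterm : (1 - σ t y) * ‖H t (xof y) - xof y‖ ≤
              2 * Real.sqrt (1 - F y) := by
            by_cases hσbig : 1 ≤ F y * ‖H t (xof y) - xof y‖ / Real.sqrt (1 - F y)
            · have hσeq : σ t y = 1 := by
                simp only [hσdef]
                exact min_eq_left hσbig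
              rw [hσeq]
              simp [Real.sqrt_nonneg]
            · push_neg at hσbig
              have hsqpos : 0 < Real.sqrt (1 - F y) :=
                Real.sqrt_pos.mpr (by linarith)
              have hlt2 : F y * ‖H t (xof y) - xof y‖ < Real.sqrt (1 - F y) :=
                (div_lt_one hsqpos).mp hσbig
              nlinarith [hlt2, mul_nonneg hσ0 (norm_nonneg (H t (xof y) - xof y)),
                mul_nonneg (show (0:ℝ) ≤ 2 * F y - 1 by linarith)
                  (norm_nonneg (H t (xof y) - xof y))]
          have c0 : (0:ℝ) ≤ 1 - F y := by linarith
          have c1 : (0:ℝ) ≤ 1 - σ t y := by linarith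
          rw [hnorm1, hyv]
          nlinarith [mul_le_mul_of_nonneg_left htri (mul_nonneg c0 c1),
            mul_le_mul_of_nonneg_left hterm c0,
            mul_nonneg hr.1 (mul_nonneg (by norm_num : (0:ℝ) ≤ 2)
              (Real.sqrt_nonneg (1 - F y))),
            mul_nonneg c0 (mul_nonneg hσ0 (norm_nonneg (xof y - v)))]
      have hg0 : Filter.Tendsto
          (fun r : ℝ × (Fin m → ℝ) => ‖r.2 - v‖ + 2 * Real.sqrt (1 - F r.2))
          (nhdsWithin q (Set.Icc (0:ℝ) 1 ×ˢ coneSet v N.space)) (nhds 0) := by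
        have hc : Continuous
            (fun r : ℝ × (Fin m → ℝ) => ‖r.2 - v‖ + 2 * Real.sqrt (1 - F r.2)) :=
          ((continuous_snd.sub continuous_const).norm).add
            (continuous_const.mul (Real.continuous_sqrt.comp
              (continuous_const.sub (hFcont.comp continuous_snd))))
        have hzero : ‖q.2 - v‖ + 2 * Real.sqrt (1 - F q.2) = 0 := by
          rw [hqv]; simp [hFv]
        have := (hc.tendsto q).mono_left
          (nhdsWithin_le_nhds (s := Set.Icc (0:ℝ) 1 ×ˢ coneSet v N.space))
        rwa [hzero] at this
      have hev : ∀ᶠ r in nhdsWithin q (Set.Icc (0:ℝ) 1 ×ˢ coneSet v N.space),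
          (1:ℝ)/2 ≤ F r.2 := by
        have hmemU : {r : ℝ × (Fin m → ℝ) | (1:ℝ)/2 < F r.2} ∈ nhds q :=
          (isOpen_lt continuous_const (hFcont.comp continuous_snd)).mem_nhds
            (by show (1:ℝ)/2 < F q.2; rw [hF1]; norm_num)
        exact (Filter.eventually_iff_exists_mem.mpr
          ⟨_, nhdsWithin_le_nhds hmemU, fun r hr => le_of_lt hr⟩)
      have hevS : ∀ᶠ r in nhdsWithin q (Set.Icc (0:ℝ) 1 ×ˢ coneSet v N.space),
          r ∈ Set.Icc (0:ℝ) 1 ×ˢ coneSet v N.space := eventually_mem_nhdsWithin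
      have hgoal : Filter.Tendsto
          (fun r : ℝ × (Fin m → ℝ) => H' r.1 r.2)
          (nhdsWithin q (Set.Icc (0:ℝ) 1 ×ˢ coneSet v N.space)) (nhds v) := by
        rw [tendsto_iff_norm_sub_tendsto_zero]
        refine squeeze_zero' (Filter.Eventually.of_forall fun r => norm_nonneg _)
          ?_ hg0
        exact (hevS.and hev).mono fun r ⟨hrS, hrF⟩ => hbound r hrS hrF
      show Filter.Tendsto (fun r : ℝ × (Fin m → ℝ) => H' r.1 r.2)
        (nhdsWithin q (Set.Icc (0:ℝ) 1 ×ˢ coneSet v N.space)) (nhds (H' q.1 q.2))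
      rw [hval]
      exact hgoal
  · -- H' 0 = id
    intro y hy
    obtain ⟨hr, hlt, he⟩ := hdec y hy
    by_cases h1f : F y = 1
    · rw [he h1f]; exact hapex 0
    · obtain ⟨hxN, hyeq⟩ := hlt h1f
      have hh : H 0 (xof y) = xof y := h0 _ hxN
      have hmin : min (1:ℝ) 0 = 0 := by norm_num
      simp only [hH'def, hσdef, hh, sub_self, norm_zero, mul_zero, zero_div, hmin]
      conv_rhs => rw [hyeq]
      module
  · -- maps cone to cone
    intro t ht y hy
    obtain ⟨hr, hlt, he⟩ := hdec y hy
    by_cases h1f : F y = 1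
    · rw [he h1f, hapex t]
      exact ⟨p, hp, 1, ⟨zero_le_one, le_refl 1⟩, by simp⟩
    · obtain ⟨hxN, _⟩ := hlt h1f
      exact ⟨H t (xof y), hmaps t ht _ hxN, F y + (1 - F y) * σ t y,
        hφmem t y hy, hform t y⟩
  · -- H' 1 into cone L
    intro y hy
    obtain ⟨hr, hlt, he⟩ := hdec y hy
    by_cases h1f : F y = 1
    · rw [he h1f, hapex 1]
      exact ⟨H 1 p, h1 p hp, 1, ⟨zero_le_one, le_refl 1⟩, by simp⟩
    · obtain ⟨hxN, _⟩ := hlt h1f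
      exact ⟨H 1 (xof y), h1 _ hxN, F y + (1 - F y) * σ 1 y,
        hφmem 1 y hy, hform 1 y⟩
  · -- fixes cone L
    rintro t ht y ⟨x, hxL, s, hs, rfl⟩
    have hxN := hLN hxL
    have hFy := key x hxN s
    by_cases h1f : s = 1
    · subst h1f
      simp only [sub_self, zero_smul, one_smul, add_zero]
      exact hapex t
    · have hx' := keyx x s h1f hFy
      have hfixx : H t x = x := hfix t ht x hxL
      have hmin : min (1:ℝ) 0 = 0 := by norm_num
      simp only [hH'def, hσdef, hFy, hx', hfixx, sub_self, norm_zero, mul_zero,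
        zero_div, hmin]
      module
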